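/- Let f : (1, ∞) → ℝ be given by f(x) = √(x² − 1), and let g : (1, ∞) → ℝ be twice differentiable. Then 12 f''(x)² g''(x) − 12 f''(x) f'''(x) g'(x) + (5 f'''(x)² − 3 f''(x) f⁽⁴⁾(x)) g(x) = 0 for all x ∈ (1, ∞) if and only if there exist constants c₁, c₂ ∈ ℝ such that g(x) = c₁ (x+1)^{−1/2} + c₂ (x−1)^{−1/2} for all x ∈ (1, ∞). -/

import Mathlib

open Set Real Filter

namespace AuxSqrt

/-- basis functions: `u e t = (t+e)^{-1/2}` with `e = ±1`. -/
noncomputable def u (e : ℝ) : ℝ → ℝ := fun t => (t + e) ^ (-(1:ℝ)/2)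
noncomputable def v (e : ℝ) : ℝ → ℝ := fun t => -(1/2) * (t + e) ^ (-(3:ℝ)/2)
noncomputable def w (e : ℝ) : ℝ → ℝ := fun t => (3/4) * (t + e) ^ (-(5:ℝ)/2)

lemma hasDerivAt_u {e x : ℝ} (h : 0 < x + e) : HasDerivAt (u e) (v e x) x := by
  have h1 : HasDerivAt (fun t : ℝ => t + e) 1 x := (hasDerivAt_id x).add_const e
  have h2 := h1.rpow_const (p := -(1:ℝ)/2) (Or.inl h.ne')
  refine h2.congr_deriv (Eq.symm ?_)
  simp only [v]
  rw [show (-(1:ℝ)/2 - 1) = -(3:ℝ)/2 by norm_num]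
  ring

lemma hasDerivAt_v {e x : ℝ} (h : 0 < x + e) : HasDerivAt (v e) (w e x) x := by
  have h1 : HasDerivAt (fun t : ℝ => t + e) 1 x := (hasDerivAt_id x).add_const e
  have h2 := (h1.rpow_const (p := -(3:ℝ)/2) (Or.inl h.ne')).const_mul (-(1/2) : ℝ)
  refine h2.congr_deriv (Eq.symm ?_)
  simp only [w]
  rw [show (-(3:ℝ)/2 - 1) = -(5:ℝ)/2 by norm_num]
  ring

lemma ode_u {e x : ℝ} (he : e ^ 2 = 1) (h : 0 < x + e) :
    4 * (x ^ 2 - 1) * w e x + 12 * x * v e x + 3 * u e x = 0 := by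
  simp only [u, v, w]
  rw [show (-(1:ℝ)/2) = (-(3:ℝ)/2) + 1 by norm_num, Real.rpow_add_one h.ne',
    show (-(3:ℝ)/2) = (-(5:ℝ)/2) + 1 by norm_num, Real.rpow_add_one h.ne']
  linear_combination (3 * (x + e) ^ (-(5:ℝ)/2)) * he


noncomputable def f1 : ℝ → ℝ := fun t => t * (t ^ 2 - 1) ^ (-(1:ℝ)/2)
noncomputable def f2 : ℝ → ℝ := fun t => -((t ^ 2 - 1) ^ (-(3:ℝ)/2))
noncomputable def f3 : ℝ → ℝ := fun t => 3 * t * (t ^ 2 - 1) ^ (-(5:ℝ)/2)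
noncomputable def f4 : ℝ → ℝ := fun t => -(12 * t ^ 2 + 3) * (t ^ 2 - 1) ^ (-(7:ℝ)/2)

lemma sq_sub_one_pos {x : ℝ} (hx : 1 < x) : 0 < x ^ 2 - 1 := by nlinarith

lemma hasDerivAt_base {x : ℝ} : HasDerivAt (fun t : ℝ => t ^ 2 - 1) (2 * x) x := by
  simpa using (hasDerivAt_pow 2 x).sub_const 1

lemma hasDerivAt_f {x : ℝ} (hx : 1 < x) :
    HasDerivAt (fun t : ℝ => Real.sqrt (t ^ 2 - 1)) (f1 x) x := by
  have hpos := sq_sub_one_pos hx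
  have hs := (Real.hasDerivAt_sqrt hpos.ne').comp x hasDerivAt_base
  refine hs.congr_deriv (Eq.symm ?_)
  simp only [f1]
  rw [Real.sqrt_eq_rpow, show (-(1:ℝ)/2) = -(1/2 : ℝ) by norm_num,
    Real.rpow_neg hpos.le]
  have h2 : (x ^ 2 - 1) ^ ((1:ℝ)/2) ≠ 0 := (Real.rpow_pos_of_pos hpos _).ne'
  field_simp

lemma hasDerivAt_f1 {x : ℝ} (hx : 1 < x) : HasDerivAt f1 (f2 x) x := by
  have hpos := sq_sub_one_pos hx
  have h2 := hasDerivAt_base.rpow_const (p := -(1:ℝ)/2) (Or.inl hpos.ne')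
  have h := (hasDerivAt_id x).mul h2
  refine h.congr_deriv (Eq.symm ?_)
  simp only [f2, id]
  rw [show (-(1:ℝ)/2 - 1) = -(3:ℝ)/2 by norm_num,
    show (-(1:ℝ)/2) = (-(3:ℝ)/2) + 1 by norm_num, Real.rpow_add_one hpos.ne']
  ring

lemma hasDerivAt_f2 {x : ℝ} (hx : 1 < x) : HasDerivAt f2 (f3 x) x := by
  have hpos := sq_sub_one_pos hx
  have h2 := (hasDerivAt_base.rpow_const (p := -(3:ℝ)/2) (Or.inl hpos.ne')).neg
  refine h2.congr_deriv (Eq.symm ?_)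
  simp only [f3]
  rw [show (-(3:ℝ)/2 - 1) = -(5:ℝ)/2 by norm_num]
  ring

lemma hasDerivAt_f3 {x : ℝ} (hx : 1 < x) : HasDerivAt f3 (f4 x) x := by
  have hpos := sq_sub_one_pos hx
  have h2 := hasDerivAt_base.rpow_const (p := -(5:ℝ)/2) (Or.inl hpos.ne')
  have h := ((hasDerivAt_id x).const_mul (3:ℝ)).mul h2
  refine h.congr_deriv (Eq.symm ?_)
  simp only [f4, id]
  rw [show (-(5:ℝ)/2 - 1) = -(7:ℝ)/2 by norm_num,
    show (-(5:ℝ)/2) = (-(7:ℝ)/2) + 1 by norm_num, Real.rpow_add_one hpos.ne']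
  ring

/-- derivative transfer: if `F = G` on `Ioi 1` and `G' = H` there, then `deriv F = H` there. -/
lemma step {F G H : ℝ → ℝ} (hFG : ∀ y ∈ Ioi (1:ℝ), F y = G y)
    (hG : ∀ y ∈ Ioi (1:ℝ), HasDerivAt G (H y) y) :
    ∀ x ∈ Ioi (1:ℝ), deriv F x = H x := by
  intro x hx
  have h1 : F =ᶠ[nhds x] G := by
    filter_upwards [isOpen_Ioi.mem_nhds hx] with y hy using hFG y hy
  rw [h1.deriv_eq]
  exact (hG x hx).deriv

lemma deriv_f_eq : ∀ x ∈ Ioi (1:ℝ),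
    deriv (fun t : ℝ => Real.sqrt (t ^ 2 - 1)) x = f1 x :=
  fun x hx => (hasDerivAt_f hx).deriv

lemma deriv2_f_eq : ∀ x ∈ Ioi (1:ℝ),
    deriv^[2] (fun t : ℝ => Real.sqrt (t ^ 2 - 1)) x = f2 x := by
  have h := step deriv_f_eq (fun y hy => hasDerivAt_f1 hy)
  intro x hx
  simpa [Function.iterate_succ, Function.comp] using h x hx

lemma deriv3_f_eq : ∀ x ∈ Ioi (1:ℝ),
    deriv^[3] (fun t : ℝ => Real.sqrt (t ^ 2 - 1)) x = f3 x := by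
  have h := step deriv2_f_eq (fun y hy => hasDerivAt_f2 hy)
  intro x hx
  have h2 := h x hx
  simp only [Function.iterate_succ, Function.iterate_zero, Function.comp_apply, id_eq] at h2 ⊢
  exact h2

lemma deriv4_f_eq : ∀ x ∈ Ioi (1:ℝ),
    deriv^[4] (fun t : ℝ => Real.sqrt (t ^ 2 - 1)) x = f4 x := by
  have h := step deriv3_f_eq (fun y hy => hasDerivAt_f3 hy)
  intro x hx
  have h2 := h x hx
  simp only [Function.iterate_succ, Function.iterate_zero, Function.comp_apply, id_eq] at h2 ⊢
  exact h2


/-- The big expression factors as a positive multiple of the clean ODE. -/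
lemma reduction (g : ℝ → ℝ) {x : ℝ} (hx : 1 < x) :
    12 * (f2 x) ^ 2 * deriv (deriv g) x - 12 * f2 x * f3 x * deriv g x
      + (5 * (f3 x) ^ 2 - 3 * f2 x * f4 x) * g x
    = 3 * ((x ^ 2 - 1) ^ (-(7:ℝ)/2)) ^ 2 * (x ^ 2 - 1) ^ 3
        * (4 * (x ^ 2 - 1) * deriv (deriv g) x + 12 * x * deriv g x + 3 * g x) := by
  have hpos := sq_sub_one_pos hx
  simp only [f2, f3, f4]
  rw [show (-(3:ℝ)/2) = ((-(7:ℝ)/2) + 1) + 1 by norm_num, Real.rpow_add_one hpos.ne',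
    Real.rpow_add_one hpos.ne',
    show (-(5:ℝ)/2) = (-(7:ℝ)/2) + 1 by norm_num, Real.rpow_add_one hpos.ne']
  ring

lemma factor_pos {x : ℝ} (hx : 1 < x) :
    0 < 3 * ((x ^ 2 - 1) ^ (-(7:ℝ)/2)) ^ 2 * (x ^ 2 - 1) ^ 3 := by
  have hpos := sq_sub_one_pos hx
  have := Real.rpow_pos_of_pos hpos (-(7:ℝ)/2)
  positivity

/-- A function with zero derivative on `Ioi 1` is constant there. -/
lemma const_on {F : ℝ → ℝ} (h : ∀ x ∈ Ioi (1:ℝ), HasDerivAt F 0 x) :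
    ∀ x ∈ Ioi (1:ℝ), F x = F 2 := by
  intro x hx
  refine (convex_Ioi (1:ℝ)).is_const_of_fderivWithin_eq_zero
    (fun y hy => (h y hy).differentiableAt.differentiableWithinAt) ?_ hx (by norm_num)
  intro y hy
  rw [fderivWithin_of_isOpen isOpen_Ioi hy, (h y hy).hasFDerivAt.fderiv]
  ext t
  simp


/-- Wronskian-type function. -/
noncomputable def Wf : ℝ → ℝ := fun t => u 1 t * v (-1) t - v 1 t * u (-1) t

lemma pos1 {x : ℝ} (hx : 1 < x) : 0 < x + 1 := by linarith
lemma posm1 {x : ℝ} (hx : 1 < x) : 0 < x + (-1) := by linarith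

lemma Wf_eq {x : ℝ} (hx : 1 < x) :
    Wf x = -((x + 1) ^ (-(3:ℝ)/2) * (x + (-1)) ^ (-(3:ℝ)/2)) := by
  simp only [Wf, u, v]
  rw [show (-(1:ℝ)/2) = (-(3:ℝ)/2) + 1 by norm_num,
    Real.rpow_add_one (pos1 hx).ne', Real.rpow_add_one (posm1 hx).ne']
  ring

lemma Wf_ne {x : ℝ} (hx : 1 < x) : Wf x ≠ 0 := by
  rw [Wf_eq hx]
  have h1 := Real.rpow_pos_of_pos (pos1 hx) (-(3:ℝ)/2)
  have h2 := Real.rpow_pos_of_pos (posm1 hx) (-(3:ℝ)/2)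
  nlinarith

lemma hasDerivAt_Wf {x : ℝ} (hx : 1 < x) :
    HasDerivAt Wf (-(3 * x) / (x ^ 2 - 1) * Wf x) x := by
  have h1 := pos1 hx
  have h2 := posm1 hx
  have h := ((hasDerivAt_u h1).mul (hasDerivAt_v h2)).sub
    ((hasDerivAt_v h1).mul (hasDerivAt_u h2))
  refine h.congr_deriv (Eq.symm ?_)
  have e1 := ode_u (e := 1) (by norm_num) h1
  have e2 := ode_u (e := -1) (by norm_num) h2
  have hpos := sq_sub_one_pos hx
  simp only [Wf]
  rw [div_mul_eq_mul_div, div_eq_iff hpos.ne']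
  linear_combination (-(u 1 x)/4) * e2 + (u (-1) x/4) * e1

/-- numerator functions. -/
noncomputable def N (g : ℝ → ℝ) (e : ℝ) : ℝ → ℝ :=
  fun t => g t * v e t - deriv g t * u e t

lemma hasDerivAt_N {g : ℝ → ℝ} {e x : ℝ} (he : e ^ 2 = 1) (hx : 1 < x)
    (hpe : 0 < x + e)
    (hg1 : DifferentiableAt ℝ g x) (hg2 : DifferentiableAt ℝ (deriv g) x)
    (hode : 4 * (x ^ 2 - 1) * deriv (deriv g) x + 12 * x * deriv g x + 3 * g x = 0) :
    HasDerivAt (N g e) (-(3 * x) / (x ^ 2 - 1) * N g e x) x := by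
  have h := (hg1.hasDerivAt.mul (hasDerivAt_v hpe)).sub
    (hg2.hasDerivAt.mul (hasDerivAt_u hpe))
  refine h.congr_deriv (Eq.symm ?_)
  have e1 := ode_u (e := e) he hpe
  have hpos := sq_sub_one_pos hx
  simp only [N]
  rw [div_mul_eq_mul_div, div_eq_iff hpos.ne']
  linear_combination (-(g x)/4) * e1 + (u e x/4) * hode

/-- quotient of two functions scaling the same way has zero derivative. -/
lemma ratio_deriv {F G : ℝ → ℝ} {x k : ℝ}
    (hF : HasDerivAt F (k * F x) x) (hG : HasDerivAt G (k * G x) x)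
    (hGne : G x ≠ 0) : HasDerivAt (fun t => F t / G t) 0 x := by
  have h := hF.div hG hGne
  refine h.congr_deriv (Eq.symm ?_)
  field_simp
  ring


lemma iterate2 (g : ℝ → ℝ) (x : ℝ) : deriv^[2] g x = deriv (deriv g) x := by
  simp only [Function.iterate_succ, Function.iterate_zero, Function.comp_apply, id_eq]

end AuxSqrt

open AuxSqrt in
/-- Theorem 6.1, case 1): for `f(x) = √(x²-1)` on `(1,∞)`, a twice
differentiable `g` satisfies the second equation of system (sys1) iff
`g(x) = c₁(x+1)^{-1/2} + c₂(x-1)^{-1/2}`. -/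
theorem one_var_admissible_sqrt_sq_sub_one (g : ℝ → ℝ)
    (hg : ∀ x ∈ Ioi (1 : ℝ), DifferentiableAt ℝ g x ∧ DifferentiableAt ℝ (deriv g) x) :
    (∀ x ∈ Ioi (1 : ℝ),
        12 * (deriv^[2] (fun t => Real.sqrt (t ^ 2 - 1)) x) ^ 2 * deriv^[2] g x
          - 12 * deriv^[2] (fun t => Real.sqrt (t ^ 2 - 1)) x
              * deriv^[3] (fun t => Real.sqrt (t ^ 2 - 1)) x * deriv g x
          + (5 * (deriv^[3] (fun t => Real.sqrt (t ^ 2 - 1)) x) ^ 2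
              - 3 * deriv^[2] (fun t => Real.sqrt (t ^ 2 - 1)) x
                  * deriv^[4] (fun t => Real.sqrt (t ^ 2 - 1)) x) * g x = 0) ↔
    (∃ c₁ c₂ : ℝ, ∀ x ∈ Ioi (1 : ℝ),
        g x = c₁ * (x + 1) ^ (-(1 : ℝ) / 2) + c₂ * (x - 1) ^ (-(1 : ℝ) / 2)) := by
  constructor
  · intro h
    have hode : ∀ x ∈ Ioi (1:ℝ),
        4 * (x ^ 2 - 1) * deriv (deriv g) x + 12 * x * deriv g x + 3 * g x = 0 := by
      intro x hx
      have hx1 : (1:ℝ) < x := hx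
      have hb := h x hx
      rw [deriv2_f_eq x hx, deriv3_f_eq x hx, deriv4_f_eq x hx, iterate2 g x,
        reduction g hx1] at hb
      exact (mul_eq_zero.mp hb).resolve_left (factor_pos hx1).ne'
    have hc : ∀ e : ℝ, e ^ 2 = 1 → (∀ y ∈ Ioi (1:ℝ), 0 < y + e) →
        ∀ x ∈ Ioi (1:ℝ), N g e x / Wf x = N g e 2 / Wf 2 := by
      intro e he hpe
      apply const_on
      intro y hy
      exact ratio_deriv
        (hasDerivAt_N he hy (hpe y hy) (hg y hy).1 (hg y hy).2 (hode y hy))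
        (hasDerivAt_Wf hy) (Wf_ne hy)
    refine ⟨N g (-1) 2 / Wf 2, -(N g 1 2) / Wf 2, ?_⟩
    intro x hx
    have hx1 : (1:ℝ) < x := hx
    have h1 := hc (-1) (by norm_num) (fun y hy => by
      have : (1:ℝ) < y := hy; linarith) x hx
    have h2 := hc 1 (by norm_num) (fun y hy => by
      have : (1:ℝ) < y := hy; linarith) x hx
    have key : g x = (N g (-1) x / Wf x) * u 1 x + (-(N g 1 x) / Wf x) * u (-1) x := by
      have hW := Wf_ne hx1
      field_simp
      simp only [N, Wf]
      ring
    rw [key, h1, neg_div, h2, ← neg_div]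
    have hu1 : u 1 x = (x + 1) ^ (-(1:ℝ)/2) := rfl
    have hu2 : u (-1) x = (x - 1) ^ (-(1:ℝ)/2) := by
      simp only [u]
      norm_num [show x + (-1:ℝ) = x - 1 by ring]
    rw [hu1, hu2]
  · rintro ⟨c₁, c₂, hcg⟩ x hx
    have hx1 : (1:ℝ) < x := hx
    have h1 : (0:ℝ) < x + 1 := by linarith
    have h2 : (0:ℝ) < x + (-1) := by linarith
    have hgeq : ∀ y ∈ Ioi (1:ℝ), g y = c₁ * u 1 y + c₂ * u (-1) y := by
      intro y hy
      rw [hcg y hy]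
      simp only [u]
      norm_num [show y + (-1:ℝ) = y - 1 by ring]
    have d1 : ∀ y ∈ Ioi (1:ℝ), deriv g y = c₁ * v 1 y + c₂ * v (-1) y := by
      refine step hgeq fun y hy => ?_
      have hy1 : (1:ℝ) < y := hy
      exact ((hasDerivAt_u (by linarith)).const_mul c₁).add
        ((hasDerivAt_u (by linarith)).const_mul c₂)
    have d2 : ∀ y ∈ Ioi (1:ℝ), deriv (deriv g) y = c₁ * w 1 y + c₂ * w (-1) y := by
      refine step d1 fun y hy => ?_
      have hy1 : (1:ℝ) < y := hy
      exact ((hasDerivAt_v (by linarith)).const_mul c₁).add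
        ((hasDerivAt_v (by linarith)).const_mul c₂)
    rw [deriv2_f_eq x hx, deriv3_f_eq x hx, deriv4_f_eq x hx, iterate2 g x,
      reduction g hx1, d1 x hx, d2 x hx, hgeq x hx]
    have e1 := ode_u (e := 1) (by norm_num) h1
    have e2 := ode_u (e := -1) (by norm_num) h2
    linear_combination (3 * ((x ^ 2 - 1) ^ (-(7:ℝ)/2)) ^ 2 * (x ^ 2 - 1) ^ 3 * c₁) * e1
      + (3 * ((x ^ 2 - 1) ^ (-(7:ℝ)/2)) ^ 2 * (x ^ 2 - 1) ^ 3 * c₂) * e2
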